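/- T₂ is not closed under Kleene plus: there exists a regular language L over {a,b} accepted by a DFA with at most 2 semi-observable states such that L⁺ is not accepted by any DFA with at most 2 semi-observable states. -/

import Mathlib

open Computability

/-- A state `q` of a DFA is *observable* if some word leads from it to an accepting state. -/
def ObsState {α σ : Type} (M : DFA α σ) (q : σ) : Prop :=
  ∃ w : List α, M.evalFrom q w ∈ M.accept

/-- A state is *semi-observable* if it is observable and some single input symbol
leads from it to a non-observable state. -/
def SemiObsState {α σ : Type} (M : DFA α σ) (q : σ) : Prop :=
  ObsState M q ∧ ∃ a : α, ¬ ObsState M (M.step q a)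

/-- All states of the DFA are accessible from the start state. -/
def Accessible {α σ : Type} (M : DFA α σ) : Prop :=
  ∀ q : σ, ∃ w : List α, M.eval w = q

/-- `L` is accepted by some (completely specified, accessible) DFA all of whose
states are observable.  This is membership in the family `O` over the alphabet `α`. -/
def AcceptsObservably (α : Type) (L : Language α) : Prop :=
  ∃ (σ : Type) (_ : Fintype σ) (M : DFA α σ),
    Accessible M ∧ (∀ q : σ, ObsState M q) ∧ M.accepts = L

/-- Membership in the family `T_k`: `L` is accepted by some accessible DFA with at
most `k` semi-observable states. -/
def InT (α : Type) (k : ℕ) (L : Language α) : Prop :=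
  ∃ (σ : Type) (_ : Fintype σ) (M : DFA α σ),
    Accessible M ∧ M.accepts = L ∧ {q : σ | SemiObsState M q}.ncard ≤ k

/-- The alphabet (the whole type `α`) is minimal for `L`: every letter occurs in some word of `L`. -/
def MinimalAlphabet {α : Type} (L : Language α) : Prop :=
  ∀ a : α, ∃ w ∈ L, a ∈ w

/-- witness DFA -/
def Mw : DFA (Fin 2) (Fin 4) where
  step q a := ![![3,1],![3,2],![2,0],![3,3]] q a
  start := 0
  accept := {q | q = 2}

lemma dead_sink : ∀ v : List (Fin 2), Mw.evalFrom 3 v = 3 := by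
  intro v
  induction v with
  | nil => rfl
  | cons a v ih =>
    have h : Mw.step 3 a = 3 := by fin_cases a <;> rfl
    show Mw.evalFrom (Mw.step 3 a) v = 3
    rw [h]; exact ih

abbrev Lw : Language (Fin 2) := Mw.accepts

/-- every word of L starts with bb (b = 1) -/
lemma starts_bb : ∀ w ∈ Lw, ∃ v, w = 1 :: 1 :: v := by
  intro w hw
  have hw' : Mw.eval w = 2 := hw
  match w with
  | [] => exact absurd hw' (by decide)
  | 0 :: w' =>
    exfalso
    have h3 : Mw.eval ((0:Fin 2) :: w') = 3 := dead_sink w'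
    rw [hw'] at h3; exact absurd h3 (by decide)
  | [1] => exact absurd hw' (by decide)
  | 1 :: 0 :: w'' =>
    exfalso
    have h3 : Mw.eval ((1:Fin 2) :: (0:Fin 2) :: w'') = 3 := dead_sink w''
    rw [hw'] at h3; exact absurd h3 (by decide)
  | 1 :: 1 :: w'' => exact ⟨w'', rfl⟩

/-- no word of L has prefix bbba -/
lemma no_bbba : ∀ v, ((1:Fin 2) :: 1 :: 1 :: 0 :: v) ∉ Lw := by
  intro v hv
  have hv' : Mw.eval ((1:Fin 2) :: 1 :: 1 :: 0 :: v) = 2 := hv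
  have h3 : Mw.eval ((1:Fin 2) :: 1 :: 1 :: 0 :: v) = 3 := dead_sink v
  rw [hv'] at h3; exact absurd h3 (by decide)

/-- every nonempty word of L∗ starts with bb -/
lemma kstar_starts_bb : ∀ w ∈ Lw∗, w ≠ [] → ∃ v, w = 1 :: 1 :: v := by
  intro w hw hne
  rw [Language.mem_kstar] at hw
  obtain ⟨S, rfl, hS⟩ := hw
  match S with
  | [] => exact absurd rfl hne
  | y :: S' =>
    obtain ⟨v, hv⟩ := starts_bb y (hS y (by simp))
    subst hv
    exact ⟨v ++ S'.flatten, by simp⟩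

lemma plus_starts_bb : ∀ w ∈ Lw * Lw∗, ∃ v, w = 1 :: 1 :: v := by
  intro w hw
  rw [Language.mem_mul] at hw
  obtain ⟨x, hx, y, _, rfl⟩ := hw
  obtain ⟨v, rfl⟩ := starts_bb x hx
  exact ⟨v ++ y, by simp⟩

-- negative membership facts for L⁺
lemma not_a (w : List (Fin 2)) : (0 :: w) ∉ Lw * Lw∗ := by
  intro h
  obtain ⟨v, hv⟩ := plus_starts_bb _ h
  simp only [List.cons.injEq] at hv
  exact absurd hv.1 (by decide)

lemma not_ba (w : List (Fin 2)) : (1 :: 0 :: w) ∉ Lw * Lw∗ := by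
  intro h
  obtain ⟨v, hv⟩ := plus_starts_bb _ h
  simp only [List.cons.injEq] at hv
  exact absurd hv.2.1 (by decide)

lemma not_b : ([1] : List (Fin 2)) ∉ Lw * Lw∗ := by
  intro h
  obtain ⟨v, hv⟩ := plus_starts_bb _ h
  simp at hv

lemma not_bbb : ([1,1,1] : List (Fin 2)) ∉ Lw * Lw∗ := by
  intro h
  rw [Language.mem_mul] at h
  obtain ⟨x, hx, y, hy, hxy⟩ := h
  obtain ⟨v, rfl⟩ := starts_bb x hx
  have hvy : v ++ y = [1] := by simpa using hxy
  match v with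
  | [] =>
    simp only [List.nil_append] at hvy
    subst hvy
    obtain ⟨v', hv'⟩ := kstar_starts_bb _ hy (by simp)
    simp at hv'
  | c :: v' =>
    simp only [List.cons_append, List.cons.injEq] at hvy
    obtain ⟨rfl, hvy2⟩ := hvy
    obtain ⟨rfl, rfl⟩ := List.append_eq_nil_iff.mp hvy2
    have : Mw.eval [1,1,1] = 2 := hx
    exact absurd this (by decide)

lemma not_bbba (w : List (Fin 2)) : (1 :: 1 :: 1 :: 0 :: w) ∉ Lw * Lw∗ := by
  intro h
  rw [Language.mem_mul] at h
  obtain ⟨x, hx, y, hy, hxy⟩ := h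
  obtain ⟨v, rfl⟩ := starts_bb x hx
  have hvy : v ++ y = 1 :: 0 :: w := by simpa using hxy
  match v with
  | [] =>
    simp only [List.nil_append] at hvy
    subst hvy
    obtain ⟨v', hv'⟩ := kstar_starts_bb _ hy (by simp)
    simp only [List.cons.injEq] at hv'
    exact absurd hv'.2.1 (by decide)
  | c :: v' =>
    simp only [List.cons_append, List.cons.injEq] at hvy
    obtain ⟨rfl, hvy2⟩ := hvy
    match v' with
    | [] =>
      have : Mw.eval [1,1,1] = 2 := hx
      exact absurd this (by decide)
    | d :: v'' =>
      simp only [List.cons_append, List.cons.injEq] at hvy2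
      obtain ⟨rfl, _⟩ := hvy2
      exact no_bbba v'' hx

-- positive membership facts
lemma bb_mem : ([1,1] : List (Fin 2)) ∈ Lw := by
  show Mw.eval [1,1] = 2; decide

lemma bbbbb_mem : ([1,1,1,1,1] : List (Fin 2)) ∈ Lw := by
  show Mw.eval [1,1,1,1,1] = 2; decide

lemma bb_plus : ([1,1] : List (Fin 2)) ∈ Lw * Lw∗ :=
  Language.mem_mul.mpr ⟨[1,1], bb_mem, [], Language.nil_mem_kstar _, by simp⟩

lemma bbbb_plus : ([1,1,1,1] : List (Fin 2)) ∈ Lw * Lw∗ :=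
  Language.mem_mul.mpr ⟨[1,1], bb_mem, [1,1],
    (Language.mem_kstar).mpr ⟨[[1,1]], by simp, by simpa using bb_mem⟩, by simp⟩

lemma bbbbb_plus : ([1,1,1,1,1] : List (Fin 2)) ∈ Lw * Lw∗ :=
  Language.mem_mul.mpr ⟨[1,1,1,1,1], bbbbb_mem, [], Language.nil_mem_kstar _, by simp⟩

/-- `T₂` is not closed under Kleene plus. -/
theorem T2_not_closed_kleene_plus :
    ∃ L : Language (Fin 2), InT (Fin 2) 2 L ∧ ¬ InT (Fin 2) 2 (L * L∗) := by
  refine ⟨Lw, ?_, ?_⟩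
  · -- L is in T₂, witnessed by Mw itself
    refine ⟨Fin 4, inferInstance, Mw, ?_, rfl, ?_⟩
    · intro q
      fin_cases q
      · exact ⟨[], rfl⟩
      · exact ⟨[1], rfl⟩
      · exact ⟨[1,1], rfl⟩
      · exact ⟨[0], rfl⟩
    · have hsub : {q : Fin 4 | SemiObsState Mw q} ⊆ {0, 1} := by
        intro q hq
        fin_cases q
        · exact Set.mem_insert _ _
        · exact Set.mem_insert_of_mem _ rfl
        · -- state 2: both successors observable
          exfalso
          obtain ⟨_, a, ha⟩ := hq
          fin_cases a
          · exact ha ⟨[], rfl⟩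
          · exact ha ⟨[1,1], rfl⟩
        · -- state 3: not observable
          exfalso
          obtain ⟨⟨w, hw⟩, _⟩ := hq
          have h3 : Mw.evalFrom 3 w = 3 := dead_sink w
          have hw' : Mw.evalFrom 3 w = 2 := hw
          rw [hw'] at h3; exact absurd h3 (by decide)
      calc {q : Fin 4 | SemiObsState Mw q}.ncard ≤ ({0, 1} : Set (Fin 4)).ncard :=
            Set.ncard_le_ncard hsub (Set.toFinite _)
        _ = 2 := Set.ncard_pair (by decide)
  · -- L⁺ is not in T₂
    rintro ⟨σ, hfin, N, -, hacc, hcard⟩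
    -- membership transferred to N
    have hmem : ∀ w : List (Fin 2), w ∈ Lw * Lw∗ ↔ N.eval w ∈ N.accept := by
      intro w; rw [← hacc]; rfl
    set p0 := N.eval ([] : List (Fin 2)) with hp0
    set p1 := N.eval [1] with hp1
    set p2 := N.eval [1,1,1] with hp2
    have heval : ∀ u w : List (Fin 2), N.evalFrom (N.eval u) w = N.eval (u ++ w) := by
      intro u w; exact (N.evalFrom_of_append N.start u w).symm
    -- semi-observability of the three states
    have so0 : SemiObsState N p0 := by
      refine ⟨⟨[1,1], (hmem [1,1]).mp bb_plus⟩, 0, ?_⟩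
      rintro ⟨w, hw⟩
      have : N.evalFrom (N.eval [0]) w ∈ N.accept := hw
      rw [heval] at this
      exact not_a w ((hmem _).mpr this)
    have so1 : SemiObsState N p1 := by
      refine ⟨⟨[1], ?_⟩, 0, ?_⟩
      · have := heval [1] [1]
        rw [hp1]; rw [show N.evalFrom (N.eval [1]) [1] = N.eval [1,1] from this]
        exact (hmem [1,1]).mp bb_plus
      · rintro ⟨w, hw⟩
        have h' : N.evalFrom (N.eval [1,0]) w ∈ N.accept := hw
        rw [heval] at h'
        exact not_ba w ((hmem _).mpr h')
    have so2 : SemiObsState N p2 := by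
      refine ⟨⟨[1], ?_⟩, 0, ?_⟩
      · rw [hp2, heval]
        exact (hmem [1,1,1,1]).mp bbbb_plus
      · rintro ⟨w, hw⟩
        have h' : N.evalFrom (N.eval [1,1,1,0]) w ∈ N.accept := hw
        rw [heval] at h'
        exact not_bbba w ((hmem _).mpr h')
    -- pairwise distinctness
    have d01 : p0 ≠ p1 := by
      intro h
      have h1 : N.eval [1] ∈ N.accept → False := fun hc => not_b ((hmem _).mpr hc)
      have h2 : N.eval [1,1] ∈ N.accept := (hmem _).mp bb_plus
      apply h1
      have e0 : N.eval [1] = N.evalFrom p0 [1] := (heval [] [1]).symm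
      rw [e0, h, heval]
      exact h2
    have d02 : p0 ≠ p2 := by
      intro h
      have h1 : N.eval [1] ∈ N.accept → False := fun hc => not_b ((hmem _).mpr hc)
      apply h1
      have e0 : N.eval [1] = N.evalFrom p0 [1] := (heval [] [1]).symm
      rw [e0, h, heval]
      exact (hmem [1,1,1,1]).mp bbbb_plus
    have d12 : p1 ≠ p2 := by
      intro h
      have h1 : N.eval [1,1,1] ∈ N.accept → False := fun hc => not_bbb ((hmem _).mpr hc)
      apply h1
      have e0 : N.eval [1,1,1] = N.evalFrom p1 [1,1] := (heval [1] [1,1]).symm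
      rw [e0, h, heval]
      exact (hmem [1,1,1,1,1]).mp bbbbb_plus
    -- three distinct semi-observable states contradict ncard ≤ 2
    have hsub : ({p0, p1, p2} : Set σ) ⊆ {q : σ | SemiObsState N q} := by
      rintro q (rfl | rfl | rfl)
      exacts [so0, so1, so2]
    have h3 : ({p0, p1, p2} : Set σ).ncard = 3 := by
      rw [Set.ncard_insert_of_notMem (by simp [d01, d02]) (Set.toFinite _),
          Set.ncard_pair d12]
    have : (3 : ℕ) ≤ 2 := by
      calc (3:ℕ) = ({p0, p1, p2} : Set σ).ncard := h3.symm
        _ ≤ {q : σ | SemiObsState N q}.ncard := Set.ncard_le_ncard hsub (Set.toFinite _)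
        _ ≤ 2 := hcard
    omega
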